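/- Suppose two defenders on the unit circle with speeds v1 ≥ v2 and v1 + 3·v2 = 1 are at distance s(t) ≥ 2·v2. Then for any attack location x on the circle, the defenders can move (each at most their speed) so that some defender reaches x and the new distance s(t+1) between them is still at least 2·v2. -/
import Mathlib


/-- Arc-length distance on the circle of circumference 1, with points
represented by arbitrary reals taken modulo 1. -/
noncomputable def circDist (a b : ℝ) : ℝ :=
  min (Int.fract (a - b)) (1 - Int.fract (a - b))

lemma circDist_eq_base (a b x : ℝ) :
    circDist a b = min |Int.fract (a - x) - Int.fract (b - x)|
      (1 - |Int.fract (a - x) - Int.fract (b - x)|) := by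
  have hfa0 : (0:ℝ) ≤ Int.fract (a - x) := Int.fract_nonneg _
  have hfa1 : Int.fract (a - x) < 1 := Int.fract_lt_one _
  have hfb0 : (0:ℝ) ≤ Int.fract (b - x) := Int.fract_nonneg _
  have hfb1 : Int.fract (b - x) < 1 := Int.fract_lt_one _
  have key : Int.fract (a - b) = Int.fract (Int.fract (a - x) - Int.fract (b - x)) := by
    rw [Int.fract_eq_fract]
    refine ⟨⌊a - x⌋ - ⌊b - x⌋, ?_⟩
    unfold Int.fract
    push_cast
    ring
  unfold circDist
  rw [key]
  rcases le_or_gt (Int.fract (b - x)) (Int.fract (a - x)) with h | h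
  · have hs : Int.fract (Int.fract (a - x) - Int.fract (b - x))
        = Int.fract (a - x) - Int.fract (b - x) :=
      Int.fract_eq_self.mpr ⟨by linarith, by linarith⟩
    rw [hs, abs_of_nonneg (by linarith)]
  · have h1 : Int.fract (Int.fract (a - x) - Int.fract (b - x))
        = Int.fract (a - x) - Int.fract (b - x) + 1 := by
      have hself : Int.fract (Int.fract (a - x) - Int.fract (b - x) + 1)
          = Int.fract (a - x) - Int.fract (b - x) + 1 :=
        Int.fract_eq_self.mpr ⟨by linarith, by linarith⟩
      rw [← hself, Int.fract_eq_fract]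
      exact ⟨-1, by push_cast; ring⟩
    rw [h1, abs_of_nonpos (by linarith)]
    rw [min_comm]
    ring_nf
lemma circDist_self (a : ℝ) : circDist a a = 0 := by
  unfold circDist
  simp

lemma circDist_comm (a b : ℝ) : circDist a b = circDist b a := by
  rw [circDist_eq_base a b 0, circDist_eq_base b a 0, abs_sub_comm]

lemma escape (v₂ p x : ℝ) (h2 : 0 < v₂) (hv : 4 * v₂ ≤ 1)
    (hp : v₂ ≤ circDist p x) : ∃ y, circDist p y ≤ v₂ ∧ 2 * v₂ ≤ circDist y x := by
  have hf0 : (0:ℝ) ≤ Int.fract (p - x) := Int.fract_nonneg _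
  have hf1 : Int.fract (p - x) < 1 := Int.fract_lt_one _
  have hpx : circDist p x = min (Int.fract (p - x)) (1 - Int.fract (p - x)) := by
    rw [circDist_eq_base p x x, sub_self, Int.fract_zero, sub_zero, abs_of_nonneg hf0]
  set f := Int.fract (p - x) with hfd
  rw [hpx] at hp
  have hpf1 : v₂ ≤ f := le_trans hp (min_le_left _ _)
  have hpf2 : v₂ ≤ 1 - f := le_trans hp (min_le_right _ _)
  rcases le_total f (1/2) with hhalf | hhalf
  · set g := min (f + v₂) (1/2) with hgd
    have hg1 : g ≤ 1/2 := min_le_right _ _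
    have hgf : f ≤ g := le_min (by linarith) hhalf
    have hg2v : 2 * v₂ ≤ g := le_min (by linarith) (by linarith)
    have hgv : g ≤ f + v₂ := min_le_left _ _
    have hfrg : Int.fract g = g := Int.fract_eq_self.mpr ⟨by linarith, by linarith⟩
    refine ⟨x + g, ?_, ?_⟩
    · rw [circDist_eq_base p (x + g) x, show x + g - x = g by ring, hfrg, ← hfd]
      calc min |f - g| (1 - |f - g|) ≤ |f - g| := min_le_left _ _
        _ = g - f := by rw [abs_of_nonpos (by linarith)]; ring
        _ ≤ v₂ := by linarith
    · rw [circDist_eq_base (x + g) x x, show x + g - x = g by ring, hfrg, sub_self,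
        Int.fract_zero, sub_zero, abs_of_nonneg (by linarith)]
      exact le_min hg2v (by linarith)
  · set g := max (f - v₂) (1/2) with hgd
    have hg1 : 1/2 ≤ g := le_max_right _ _
    have hgf : g ≤ f := max_le (by linarith) hhalf
    have hgub : g ≤ 1 - 2 * v₂ := max_le (by linarith) (by linarith)
    have hgv : f - v₂ ≤ g := le_max_left _ _
    have hfrg : Int.fract g = g := Int.fract_eq_self.mpr ⟨by linarith, by linarith⟩
    refine ⟨x + g, ?_, ?_⟩
    · rw [circDist_eq_base p (x + g) x, show x + g - x = g by ring, hfrg, ← hfd]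
      calc min |f - g| (1 - |f - g|) ≤ |f - g| := min_le_left _ _
        _ = f - g := abs_of_nonneg (by linarith)
        _ ≤ v₂ := by linarith
    · rw [circDist_eq_base (x + g) x x, show x + g - x = g by ring, hfrg, sub_self,
        Int.fract_zero, sub_zero, abs_of_nonneg (by linarith)]
      exact le_min (by linarith) (by linarith)

/-- Two defenders with speeds `v₁ ≥ v₂ > 0`, `v₁ + 3 v₂ = 1`, at distance at
least `2 v₂` apart: for any attack location `x`, the defenders can move (each
at most their own speed) so that one of them reaches `x` and the new distance
between them is still at least `2 v₂`. -/
theorem maintain_coverage (v₁ v₂ : ℝ) (h21 : v₂ ≤ v₁) (h2 : 0 < v₂)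
    (hsum : v₁ + 3 * v₂ = 1) (x₁ x₂ : ℝ) (hs : 2 * v₂ ≤ circDist x₁ x₂)
    (x : ℝ) :
    ∃ y₁ y₂ : ℝ, circDist x₁ y₁ ≤ v₁ ∧ circDist x₂ y₂ ≤ v₂ ∧
      (circDist y₁ x = 0 ∨ circDist y₂ x = 0) ∧ 2 * v₂ ≤ circDist y₁ y₂ := by
  have hv4 : 4 * v₂ ≤ 1 := by linarith
  have hf10 : (0:ℝ) ≤ Int.fract (x₁ - x) := Int.fract_nonneg _
  have hf11 : Int.fract (x₁ - x) < 1 := Int.fract_lt_one _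
  have hf20 : (0:ℝ) ≤ Int.fract (x₂ - x) := Int.fract_nonneg _
  have hf21 : Int.fract (x₂ - x) < 1 := Int.fract_lt_one _
  have h1x : circDist x₁ x = min (Int.fract (x₁ - x)) (1 - Int.fract (x₁ - x)) := by
    rw [circDist_eq_base x₁ x x, sub_self, Int.fract_zero, sub_zero, abs_of_nonneg hf10]
  have h2x : circDist x₂ x = min (Int.fract (x₂ - x)) (1 - Int.fract (x₂ - x)) := by
    rw [circDist_eq_base x₂ x x, sub_self, Int.fract_zero, sub_zero, abs_of_nonneg hf20]
  set f1 := Int.fract (x₁ - x) with hf1d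
  set f2 := Int.fract (x₂ - x) with hf2d
  have hb : circDist x₁ x₂ = min |f1 - f2| (1 - |f1 - f2|) := circDist_eq_base x₁ x₂ x
  rw [hb] at hs
  have hΔ1 : 2 * v₂ ≤ |f1 - f2| := le_trans hs (min_le_left _ _)
  have hΔ2 : |f1 - f2| ≤ 1 - 2 * v₂ := by
    have := le_trans hs (min_le_right _ _); linarith
  obtain ⟨hA, hB⟩ := abs_le.mp hΔ2
  by_cases hcase : circDist x₂ x ≤ v₂
  · -- defender 2 covers x, defender 1 escapes
    have hx1x : v₂ ≤ circDist x₁ x := by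
      rw [h1x]
      rw [h2x] at hcase
      rcases le_abs.mp hΔ1 with h | h <;> rcases min_le_iff.mp hcase with h' | h' <;>
        exact le_min (by linarith) (by linarith)
    obtain ⟨y₁, hy1, hy1x⟩ := escape v₂ x₁ x h2 hv4 hx1x
    exact ⟨y₁, x, le_trans hy1 h21, hcase, Or.inr (circDist_self x), hy1x⟩
  · -- covering: defender 1 covers x, defender 2 escapes
    push_neg at hcase
    have hcov : circDist x₁ x ≤ v₁ := by
      by_contra hc
      push_neg at hc
      rw [h1x] at hc
      rw [h2x] at hcase
      obtain ⟨ha1, ha2⟩ := lt_min_iff.mp hc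
      obtain ⟨hb1, hb2⟩ := lt_min_iff.mp hcase
      have : |f1 - f2| < 2 * v₂ := abs_lt.mpr ⟨by linarith, by linarith⟩
      linarith
    obtain ⟨y₂, hy2, hy2x⟩ := escape v₂ x₂ x h2 hv4 hcase.le
    exact ⟨x, y₂, hcov, hy2, Or.inl (circDist_self x), by rw [circDist_comm]; exact hy2x⟩
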